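/- For every natural number w, let ν(w) denote the number of isomorphism classes of Anosov graphs G whose number of vertices n plus number of edges m satisfies n + m = w. Then ν(w) > w/3 − √(2w) − 9/2 (as real numbers). -/

import Mathlib

/-- x ∼ y iff the open neighborhoods coincide or the closed neighborhoods coincide. -/
def simRel {V : Type*} (G : SimpleGraph V) (x y : V) : Prop :=
  G.neighborSet x = G.neighborSet y ∨
    insert x (G.neighborSet x) = insert y (G.neighborSet y)

/-- A connected simple graph is Anosov if every ∼-class has at least two vertices and every
∼-class with exactly two vertices is edgeless. -/
def IsAnosov {V : Type*} (G : SimpleGraph V) : Prop :=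
  G.Connected ∧
    (∀ x : V, 2 ≤ {y | simRel G x y}.ncard) ∧
    (∀ x y : V, {z | simRel G x z}.ncard = 2 → simRel G x y → ¬ G.Adj x y)

/-- Anosov graphs whose number of vertices plus number of edges equals `w`, up to graph
isomorphism. -/
def nuSetoid (w : ℕ) :
    Setoid {p : Σ n : ℕ, SimpleGraph (Fin n) // IsAnosov p.2 ∧ p.1 + p.2.edgeSet.ncard = w} where
  r A B := Nonempty (A.1.2 ≃g B.1.2)
  iseqv := ⟨fun _ => ⟨RelIso.refl _⟩, fun ⟨e⟩ => ⟨e.symm⟩, fun ⟨e⟩ ⟨f⟩ => ⟨e.trans f⟩⟩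

/-- `ν w`: the number of isomorphism classes of Anosov graphs with `n` vertices and `m` edges
where `n + m = w`. -/
noncomputable def nuCount (w : ℕ) : ℕ := Nat.card (Quotient (nuSetoid w))

set_option linter.unusedSectionVars false

open Finset

section Blueprint

variable {I : Type*} [Fintype I] [DecidableEq I]

def blow (Q : SimpleGraph I) (s : I → ℕ) (K : I → Prop) : SimpleGraph ((i : I) × Fin (s i)) where
  Adj x y := Q.Adj x.1 y.1 ∨ (x.1 = y.1 ∧ K x.1 ∧ x ≠ y)
  symm := by
    constructor
    rintro ⟨i,a⟩ ⟨j,b⟩ (h | ⟨h, hK, hne⟩)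
    · exact Or.inl h.symm
    · cases h; exact Or.inr ⟨rfl, hK, Ne.symm hne⟩
  loopless := by
    constructor
    rintro ⟨i,a⟩ (h | ⟨-, -, hne⟩)
    · exact Q.loopless.irrefl _ h
    · exact hne rfl

variable {Q : SimpleGraph I} {s : I → ℕ} {K : I → Prop}

lemma blow_adj {x y : (i : I) × Fin (s i)} :
    (blow Q s K).Adj x y ↔ Q.Adj x.1 y.1 ∨ (x.1 = y.1 ∧ K x.1 ∧ x ≠ y) := Iff.rfl

lemma blow_nbr_open {i : I} (hK : ¬ K i) (a : Fin (s i)) :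
    (blow Q s K).neighborSet ⟨i,a⟩ = {y | Q.Adj i y.1} := by
  ext y
  simp only [SimpleGraph.mem_neighborSet, blow_adj, Set.mem_setOf_eq]
  exact ⟨fun h => h.elim id (fun ⟨_, h2, _⟩ => absurd h2 hK), Or.inl⟩

lemma blow_nbr_closed {i : I} (hK : K i) (a : Fin (s i)) :
    insert (⟨i,a⟩ : (i : I) × Fin (s i)) ((blow Q s K).neighborSet ⟨i,a⟩)
      = {y | Q.Adj i y.1 ∨ y.1 = i} := by
  ext y
  simp only [Set.mem_insert_iff, SimpleGraph.mem_neighborSet, blow_adj, Set.mem_setOf_eq]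
  constructor
  · rintro (rfl | (h | ⟨h, -, -⟩))
    · exact Or.inr rfl
    · exact Or.inl h
    · exact Or.inr h.symm
  · rintro (h | h)
    · exact Or.inr (Or.inl h)
    · by_cases hy : y = ⟨i, a⟩
      · exact Or.inl hy
      · exact Or.inr (Or.inr ⟨h.symm, hK, Ne.symm (by simpa using hy)⟩)

lemma blow_simRel_same {i : I} (a b : Fin (s i)) :
    simRel (blow Q s K) ⟨i,a⟩ ⟨i,b⟩ := by
  by_cases hK : K i
  · exact Or.inr (by rw [blow_nbr_closed hK a, blow_nbr_closed hK b])
  · exact Or.inl (by rw [blow_nbr_open hK a, blow_nbr_open hK b])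

lemma blow_class_sub {i : I} (a : Fin (s i)) :
    {y : (i : I) × Fin (s i) | y.1 = i} ⊆ {y | simRel (blow Q s K) ⟨i,a⟩ y} := by
  rintro ⟨j, b⟩ (h : j = i)
  cases h
  exact blow_simRel_same a b

lemma blow_fiber_ncard (i : I) :
    ({y : (i : I) × Fin (s i) | y.1 = i}).ncard = s i := by
  rw [← Nat.card_coe_set_eq]
  have e : Fin (s i) ≃ {y : (i : I) × Fin (s i) | y.1 = i} := by
    refine Equiv.ofBijective (fun b => ⟨⟨i, b⟩, rfl⟩) ⟨?_, ?_⟩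
    · intro a b h
      simpa using h
    · rintro ⟨⟨j, b⟩, (h : j = i)⟩
      cases h
      exact ⟨b, rfl⟩
  rw [← Nat.card_congr e, Nat.card_eq_fintype_card, Fintype.card_fin]

theorem blow_isAnosov (hs : ∀ i, 2 ≤ s i) (hK3 : ∀ i, K i → 3 ≤ s i)
    (hQ : Q.Preconnected) (hN : ∀ i, ∃ j, Q.Adj i j) [Nonempty I] :
    IsAnosov (blow Q s K) := by
  have hfin : ∀ i : I, Nonempty (Fin (s i)) := fun i => ⟨⟨0, lt_of_lt_of_le two_pos (hs i)⟩⟩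
  have hVne : Nonempty ((i : I) × Fin (s i)) := by
    obtain ⟨i⟩ := (inferInstance : Nonempty I)
    obtain ⟨a⟩ := hfin i
    exact ⟨⟨i, a⟩⟩
  refine ⟨⟨?_⟩, ?_, ?_⟩
  · -- preconnected
    have key : ∀ (i j : I), Q.Reachable i j → ∀ (a : Fin (s i)) (b : Fin (s j)),
        (blow Q s K).Reachable ⟨i, a⟩ ⟨j, b⟩ := by
      intro i j hr
      obtain ⟨w⟩ := hr
      induction w with
      | nil =>
        intro a b
        by_cases hab : a = b
        · cases hab; exact SimpleGraph.Reachable.refl _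
        · obtain ⟨j', hj'⟩ := hN _
          obtain ⟨c⟩ := hfin j'
          have h1 : (blow Q s K).Adj ⟨_, a⟩ ⟨j', c⟩ := Or.inl hj'
          have h2 : (blow Q s K).Adj ⟨j', c⟩ ⟨_, b⟩ := Or.inl hj'.symm
          exact (h1.reachable).trans h2.reachable
      | @cons u v _ huv _ ih =>
        intro a b
        obtain ⟨c⟩ := hfin v
        have h1 : (blow Q s K).Adj ⟨u, a⟩ ⟨v, c⟩ := Or.inl huv
        exact (h1.reachable).trans (ih c b)
    rintro ⟨i, a⟩ ⟨j, b⟩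
    exact key i j (hQ i j) a b
  · rintro ⟨i, a⟩
    calc (2:ℕ) ≤ s i := hs i
    _ = ({y : (i : I) × Fin (s i) | y.1 = i}).ncard := (blow_fiber_ncard (s := s) i).symm
    _ ≤ _ := Set.ncard_le_ncard (blow_class_sub (Q := Q) (K := K) a) (Set.toFinite _)
  · rintro ⟨i, a⟩ y hcard hsim hadj
    have hsub := blow_class_sub (Q := Q) (K := K) a
    have hle : ({z | simRel (blow Q s K) ⟨i,a⟩ z}).ncard ≤
        ({y : (i : I) × Fin (s i) | y.1 = i}).ncard := by
      rw [hcard, blow_fiber_ncard (s := s) i]; exact hs i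
    have heq := Set.eq_of_subset_of_ncard_le hsub hle (Set.toFinite _)
    have hsi : s i = 2 := by
      have h2 := blow_fiber_ncard (s := s) i
      rw [heq, hcard] at h2; omega
    have hyi : y.1 = i := by
      have hy : y ∈ {z | simRel (blow Q s K) ⟨i,a⟩ z} := hsim
      rw [← heq] at hy; exact hy
    rcases hadj with h | ⟨h1, h2, h3⟩
    · rw [hyi] at h; exact Q.loopless.irrefl i h
    · have := hK3 i h2; omega

instance blowDecAdj [DecidableRel Q.Adj] [DecidablePred K] : DecidableRel (blow Q s K).Adj :=
  fun _ _ => decidable_of_iff _ blow_adj.symm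

lemma blow_degree [DecidableRel Q.Adj] [DecidablePred K] (i : I) (a : Fin (s i)) :
    (blow Q s K).degree ⟨i,a⟩
      = (∑ j : I, if Q.Adj i j then s j else 0) + (if K i then s i - 1 else 0) := by
  rw [← SimpleGraph.card_neighborFinset_eq_degree, SimpleGraph.neighborFinset_eq_filter]
  have hsig : (Finset.univ.filter ((blow Q s K).Adj ⟨i,a⟩)) =
      Finset.univ.sigma (fun j => Finset.univ.filter
        (fun b : Fin (s j) => (blow Q s K).Adj ⟨i,a⟩ ⟨j,b⟩)) := by
    ext ⟨j, b⟩
    simp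
  rw [hsig, Finset.card_sigma]
  have hcard : ∀ j : I, (Finset.univ.filter
      (fun b : Fin (s j) => (blow Q s K).Adj ⟨i,a⟩ ⟨j,b⟩)).card
      = (if Q.Adj i j then s j else 0) + (if i = j ∧ K i then s i - 1 else 0) := by
    intro j
    by_cases hQij : Q.Adj i j
    · have hij : i ≠ j := fun h => by subst h; exact Q.loopless.irrefl i hQij
      have hset : (Finset.univ.filter
          (fun b : Fin (s j) => (blow Q s K).Adj ⟨i,a⟩ ⟨j,b⟩)) = Finset.univ :=
        Finset.filter_true_of_mem (fun b _ => Or.inl hQij)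
      rw [hset]
      simp [hQij, hij]
    · by_cases hij : i = j
      · subst hij
        by_cases hKi : K i
        · have hset : (Finset.univ.filter
              (fun b : Fin (s i) => (blow Q s K).Adj ⟨i,a⟩ ⟨i,b⟩)) = Finset.univ.erase a := by
            ext b
            simp only [Finset.mem_filter, Finset.mem_univ, true_and, Finset.mem_erase, and_true]
            constructor
            · intro h
              rcases h with h | h
              · exact absurd h hQij
              · intro hba
                subst hba
                exact h.2.2 rfl
            · intro hba
              refine Or.inr ⟨rfl, hKi, fun h => hba ?_⟩
              have h2 := (Sigma.mk.inj_iff.mp h).2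
              exact (eq_of_heq h2).symm
          rw [hset, Finset.card_erase_of_mem (Finset.mem_univ a)]
          simp [hQij, hKi]
        · have hset : (Finset.univ.filter
              (fun b : Fin (s i) => (blow Q s K).Adj ⟨i,a⟩ ⟨i,b⟩)) = ∅ :=
            Finset.filter_false_of_mem (fun b _ => by
              rintro (h | ⟨-, hK, -⟩)
              · exact hQij h
              · exact hKi hK)
          rw [hset]
          simp [hQij, hKi]
      · have hset : (Finset.univ.filter
            (fun b : Fin (s j) => (blow Q s K).Adj ⟨i,a⟩ ⟨j,b⟩)) = ∅ :=
          Finset.filter_false_of_mem (fun b _ => by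
            rintro (h | ⟨h, -, -⟩)
            · exact hQij h
            · exact hij h)
        rw [hset]
        simp [hQij, hij]
  rw [Finset.sum_congr rfl (fun j _ => hcard j), Finset.sum_add_distrib]
  congr 1
  by_cases hKi : K i
  · simp only [hKi, and_true, if_true]
    rw [Finset.sum_ite_eq Finset.univ i (fun _ => s i - 1)]
    simp
  · simp [hKi]



lemma blow_edge_ncard [DecidableRel Q.Adj] [DecidablePred K] :
    2 * (blow Q s K).edgeSet.ncard
      = ∑ i : I, s i * ((∑ j : I, if Q.Adj i j then s j else 0)
          + (if K i then s i - 1 else 0)) := by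
  have hn : (blow Q s K).edgeSet.ncard = (blow Q s K).edgeFinset.card := by
    rw [SimpleGraph.edgeFinset, Set.ncard_eq_toFinset_card']
  rw [hn, ← SimpleGraph.sum_degrees_eq_twice_card_edges]
  rw [← Finset.univ_sigma_univ, Finset.sum_sigma]
  refine Finset.sum_congr rfl fun i _ => ?_
  rw [Finset.sum_congr rfl fun a _ => blow_degree i a]
  simp [Finset.sum_const, mul_comm]

end Blueprint

section Transport

variable {V W : Type*} {G : SimpleGraph V} {H : SimpleGraph W}

lemma iso_nbr_image (e : G ≃g H) (x : V) :
    H.neighborSet (e x) = e '' G.neighborSet x := by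
  ext y
  simp only [SimpleGraph.mem_neighborSet, Set.mem_image]
  constructor
  · intro h
    refine ⟨e.symm y, ?_, by simp⟩
    have : H.Adj (e x) (e (e.symm y)) := by simpa using h
    exact e.map_rel_iff.mp this
  · rintro ⟨z, hz, rfl⟩
    exact e.map_rel_iff.mpr hz

lemma simRel_iso (e : G ≃g H) (x y : V) : simRel H (e x) (e y) ↔ simRel G x y := by
  unfold simRel
  rw [iso_nbr_image e x, iso_nbr_image e y, ← Set.image_insert_eq, ← Set.image_insert_eq,
    Set.image_eq_image e.injective, Set.image_eq_image e.injective]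

lemma simRel_class_iso (e : G ≃g H) (x' : W) :
    {y' | simRel H x' y'} = e '' {y | simRel G (e.symm x') y} := by
  ext y'
  simp only [Set.mem_setOf_eq, Set.mem_image]
  constructor
  · intro h
    refine ⟨e.symm y', ?_, by simp⟩
    rw [← simRel_iso e]
    simpa using h
  · rintro ⟨z, hz, rfl⟩
    rw [← e.apply_symm_apply x', simRel_iso e]
    simpa using hz

lemma isAnosov_iso (e : G ≃g H) (h : IsAnosov G) : IsAnosov H := by
  obtain ⟨hconn, h2, h3⟩ := h
  haveI : Nonempty V := hconn.nonempty
  haveI : Nonempty W := ⟨e (Classical.arbitrary V)⟩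
  refine ⟨SimpleGraph.Connected.mk ?_, ?_, ?_⟩
  · intro x' y'
    have := (hconn.preconnected (e.symm x') (e.symm y')).map e.toHom
    simpa using this
  · intro x'
    rw [simRel_class_iso e x', Set.ncard_image_of_injective _ e.injective]
    exact h2 _
  · intro x' y' hc hsim hadj
    have hc' : {z | simRel G (e.symm x') z}.ncard = 2 := by
      rw [simRel_class_iso e x', Set.ncard_image_of_injective _ e.injective] at hc
      exact hc
    have hsim' : simRel G (e.symm x') (e.symm y') := by
      rw [← simRel_iso e, e.apply_symm_apply, e.apply_symm_apply]
      exact hsim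
    have hadj' : G.Adj (e.symm x') (e.symm y') := by
      rw [← e.map_rel_iff, e.apply_symm_apply, e.apply_symm_apply]
      exact hadj
    exact h3 _ _ hc' hsim' hadj'

lemma edge_ncard_iso (e : G ≃g H) : G.edgeSet.ncard = H.edgeSet.ncard := by
  rw [← Nat.card_coe_set_eq, ← Nat.card_coe_set_eq]
  exact Nat.card_congr e.mapEdgeSet

end Transport


def padj (τ y i j : ℕ) : Prop :=
  i ≠ j ∧ (min i j < τ ∨ (min i j = τ ∧ max i j < τ + 1 + y))

instance (τ y i j : ℕ) : Decidable (padj τ y i j) := by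
  unfold padj; infer_instance

open Finset

lemma padj_count_lt {k τ y i : ℕ} (hi : i < k) (hiτ : i < τ) :
    (((range k).filter (fun j => padj τ y i j)).card) + 1 = k := by
  have h : ((range k).filter (fun j => padj τ y i j)) = (range k).erase i := by
    ext j
    rw [Finset.mem_filter]
    simp only [Finset.mem_filter, Finset.mem_range, Finset.mem_erase, padj, ne_eq]
    omega
  rw [h, Finset.card_erase_of_mem (Finset.mem_range.mpr hi), Finset.card_range]
  omega

lemma padj_count_eq {k τ y : ℕ} (hτk : τ < k) (hy : τ + 1 + y ≤ k) :
    (((range k).filter (fun j => padj τ y τ j)).card) = τ + y := by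
  have h : ((range k).filter (fun j => padj τ y τ j))
      = range τ ∪ Ico (τ+1) (τ+1+y) := by
    ext j
    rw [Finset.mem_filter]
    simp only [Finset.mem_filter, Finset.mem_range, Finset.mem_union, Finset.mem_Ico, padj, ne_eq]
    omega
  rw [h, Finset.card_union_of_disjoint, Finset.card_range, Nat.card_Ico]
  · omega
  · rw [Finset.disjoint_left]
    intro a ha hb
    simp only [Finset.mem_range] at ha
    simp only [Finset.mem_Ico] at hb
    omega

lemma padj_count_gt {k τ y i : ℕ} (hi : i < k) (hτ : τ < i) :
    (((range k).filter (fun j => padj τ y i j)).card)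
      = τ + (if i < τ + 1 + y then 1 else 0) := by
  by_cases hcase : i < τ + 1 + y
  · have h : ((range k).filter (fun j => padj τ y i j)) = range (τ+1) := by
      ext j
      rw [Finset.mem_filter]
      simp only [Finset.mem_filter, Finset.mem_range, padj, ne_eq]
      omega
    rw [h, Finset.card_range, if_pos hcase]
  · have h : ((range k).filter (fun j => padj τ y i j)) = range τ := by
      ext j
      rw [Finset.mem_filter]
      simp only [Finset.mem_filter, Finset.mem_range, padj, ne_eq]
      omega
    rw [h, Finset.card_range, if_neg hcase]
    omega

lemma sum_split_key {k τ y : ℕ} (F : ℕ → ℕ) (hτ1 : 1 ≤ τ) (hτk : τ ≤ k)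
    (hy : τ + 1 + y ≤ k ∨ y = 0)
    (hlt : ∀ i, i < τ → F i + 1 = k)
    (heq : τ < k → F τ = τ + y)
    (hgt : ∀ i, τ < i → i < k → F i = τ + (if i < τ + 1 + y then 1 else 0)) :
    (∑ i ∈ range k, F i) + τ*τ + τ = 2*τ*k + 2*y := by
  rcases Nat.lt_or_ge τ k with hltk | hge
  · have hsplit : ∑ i ∈ range k, F i
        = (∑ i ∈ range τ, F i) + F τ + (∑ i ∈ Ico (τ+1) k, F i) := by
      rw [Finset.range_eq_Ico, ← Finset.sum_Ico_consecutive F (Nat.zero_le τ) (le_of_lt hltk),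
        ← Finset.range_eq_Ico]
      have h2 : ∑ i ∈ Ico τ k, F i = F τ + ∑ i ∈ Ico (τ+1) k, F i := by
        rw [← Finset.sum_eq_sum_Ico_succ_bot hltk]
      omega
    have h1 : ∑ i ∈ range τ, F i = τ * (k-1) := by
      rw [Finset.sum_congr rfl (fun i hi => show F i = k - 1 by
        have := hlt i (Finset.mem_range.mp hi); omega)]
      simp [Finset.sum_const, Finset.card_range]
    have hyk : y = 0 ∨ τ + 1 + y ≤ k := by tauto
    have h3 : ∑ i ∈ Ico (τ+1) k, F i = (k - (τ+1)) * τ + y := by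
      rw [Finset.sum_congr rfl (fun i hi => by
        have h := Finset.mem_Ico.mp hi
        exact hgt i (by omega) h.2)]
      rw [Finset.sum_add_distrib]
      have hA : ∑ _i ∈ Ico (τ+1) k, τ = (k - (τ+1)) * τ := by
        simp [Finset.sum_const, Nat.card_Ico, mul_comm]
      have hB : ∑ i ∈ Ico (τ+1) k, (if i < τ + 1 + y then 1 else 0) = y := by
        rw [← Finset.card_filter]
        have hf : (Ico (τ+1) k).filter (fun i => i < τ + 1 + y) = Ico (τ+1) (τ+1+y) := by
          ext j
          simp only [Finset.mem_filter, Finset.mem_Ico]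
          omega
        rw [hf, Nat.card_Ico]
        omega
      rw [hA, hB]
    rw [hsplit, h1, heq hltk, h3]
    have e1 : τ * (k-1) + τ = τ * k := by
      have hk : k - 1 + 1 = k := by omega
      calc τ * (k-1) + τ = τ * ((k-1)+1) := by ring
      _ = τ * k := by rw [hk]
    have e2 : (k - (τ+1)) * τ + (τ+1) * τ = k * τ := by
      have hk : k - (τ+1) + (τ+1) = k := by omega
      calc (k - (τ+1)) * τ + (τ+1) * τ = ((k - (τ+1)) + (τ+1)) * τ := by ring
      _ = k * τ := by rw [hk]
    nlinarith [e1, e2]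
  · have hτek : τ = k := le_antisymm hτk hge
    subst hτek
    have hy0 : y = 0 := by omega
    subst hy0
    have h1 : ∑ i ∈ range τ, F i = τ * (τ-1) := by
      rw [Finset.sum_congr rfl (fun i hi => show F i = τ - 1 by
        have := hlt i (Finset.mem_range.mp hi); omega)]
      simp [Finset.sum_const, Finset.card_range]
    rw [h1]
    have e1 : τ * (τ-1) + τ = τ * τ := by
      have hk : τ - 1 + 1 = τ := by omega
      calc τ * (τ-1) + τ = τ * ((τ-1)+1) := by ring
      _ = τ * τ := by rw [hk]
    nlinarith [e1]

lemma padj_total {k τ y : ℕ} (hτ1 : 1 ≤ τ) (hτk : τ ≤ k)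
    (hy : τ + 1 + y ≤ k ∨ y = 0) :
    (∑ i ∈ range k, ((range k).filter (fun j => padj τ y i j)).card) + τ*τ + τ
      = 2*τ*k + 2*y := by
  refine sum_split_key _ hτ1 hτk hy ?_ ?_ ?_
  · intro i hi
    exact padj_count_lt (by omega) hi
  · intro hltk
    exact padj_count_eq hltk (by omega)
  · intro i h1 h2
    exact padj_count_gt h2 h1





section Template

variable (k τ y d1 d2 s2 : ℕ) (κ1 ch : Bool)

def qadj : Fin k ⊕ Fin 3 → Fin k ⊕ Fin 3 → Prop
  | Sum.inl i, Sum.inl j => padj τ y i.val j.val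
  | Sum.inl i, Sum.inr j => (j = 0 ∧ i.val < d1) ∨ (j = 1 ∧ i.val < d2)
      ∨ (j = 2 ∧ ch = false ∧ i.val = 0)
  | Sum.inr j, Sum.inl i => (j = 0 ∧ i.val < d1) ∨ (j = 1 ∧ i.val < d2)
      ∨ (j = 2 ∧ ch = false ∧ i.val = 0)
  | Sum.inr j, Sum.inr j' => ((j = 0 ∧ j' = 2) ∨ (j = 2 ∧ j' = 0)) ∧ ch = true

instance : DecidableRel (qadj k τ y d1 d2 ch) := by
  rintro (i | i) (j | j) <;> (unfold qadj; infer_instance)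

lemma padj_symm {τ y i j : ℕ} (h : padj τ y i j) : padj τ y j i := by
  unfold padj at *
  omega

def tQ : SimpleGraph (Fin k ⊕ Fin 3) where
  Adj := qadj k τ y d1 d2 ch
  symm := by
    constructor
    rintro (i | i) (j | j) h <;> simp only [qadj] at h ⊢
    · exact padj_symm h
    · exact h
    · exact h
    · tauto
  loopless := by
    constructor
    rintro (i | i) h <;> simp only [qadj] at h
    · exact h.1 rfl
    · rcases h with ⟨(⟨h1, h2⟩ | ⟨h1, h2⟩), -⟩ <;> (rw [h1] at h2; exact absurd h2 (by decide))

instance : DecidableRel (tQ k τ y d1 d2 ch).Adj := by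
  unfold tQ; infer_instance

def tsize : Fin k ⊕ Fin 3 → ℕ := Sum.elim (fun _ => 2) ![3, s2, 2]

def tK : Fin k ⊕ Fin 3 → Prop := fun i => i = Sum.inr 0 ∧ κ1 = true

instance : DecidablePred (tK k κ1) := by
  unfold tK; infer_instance

end Template

section Template2

variable (k τ y d1 d2 s2 : ℕ) (κ1 ch : Bool)

def TG : SimpleGraph ((i : Fin k ⊕ Fin 3) × Fin (tsize k s2 i)) :=
  blow (tQ k τ y d1 d2 ch) (tsize k s2) (tK k κ1)

lemma TG_card : Fintype.card ((i : Fin k ⊕ Fin 3) × Fin (tsize k s2 i)) = 2*k + 5 + s2 := by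
  rw [Fintype.card_sigma]
  simp only [Fintype.card_fin]
  rw [Fintype.sum_sum_type]
  simp only [tsize, Sum.elim_inl, Sum.elim_inr, Finset.sum_const, Finset.card_univ,
    Fintype.card_fin, smul_eq_mul, Fin.sum_univ_three]
  simp [Matrix.cons_val_zero, Matrix.cons_val_one]
  ring

lemma TG_anosov (h2k : 2 ≤ k) (hτ1 : 1 ≤ τ) (hd1 : 1 ≤ d1) (hd2 : 1 ≤ d2) (hs2 : 2 ≤ s2) :
    IsAnosov (TG k τ y d1 d2 s2 κ1 ch) := by
  have hk0 : (0:ℕ) < k := by omega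
  have hk1 : (1:ℕ) < k := by omega
  apply blow_isAnosov
  · rintro (i | j)
    · exact le_refl 2
    · fin_cases j <;> simp [tsize] <;> omega
  · rintro (i | j) hK
    · exact absurd hK.1 (by simp [tK])
    · rw [hK.1]
      simp [tsize]
  · -- preconnectedness of the quotient
    have hub : ∀ a : Fin k ⊕ Fin 3,
        (tQ k τ y d1 d2 ch).Reachable a (Sum.inl ⟨0, hk0⟩) := by
      rintro (i | j)
      · by_cases h0 : i.val = 0
        · have h : i = ⟨0, hk0⟩ := Fin.ext h0
          rw [h]
        · have hadj : (tQ k τ y d1 d2 ch).Adj (Sum.inl i) (Sum.inl ⟨0, hk0⟩) := by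
            simp only [tQ, qadj]
            exact ⟨by simpa [Fin.ext_iff] using h0, by simp; omega⟩
          exact hadj.reachable
      · fin_cases j
        · exact SimpleGraph.Adj.reachable (by simp [tQ, qadj, Fin.ext_iff]; omega)
        · exact SimpleGraph.Adj.reachable (by simp [tQ, qadj, Fin.ext_iff]; omega)
        · cases hch : ch
          · exact SimpleGraph.Adj.reachable (by simp [tQ, qadj, Fin.ext_iff, hch])
          · refine SimpleGraph.Reachable.trans
              (SimpleGraph.Adj.reachable (v := Sum.inr 0) (by simp [tQ, qadj, Fin.ext_iff, hch])) ?_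
            exact SimpleGraph.Adj.reachable (by simp [tQ, qadj, Fin.ext_iff]; omega)
    intro a b
    exact (hub a).trans (hub b).symm
  · -- every class has a neighbor
    rintro (i | j)
    · by_cases h0 : i.val = 0
      · refine ⟨Sum.inl ⟨1, hk1⟩, ?_⟩
        show (tQ k τ y d1 d2 ch).Adj (Sum.inl i) (Sum.inl ⟨1, hk1⟩)
        simp only [tQ, qadj]
        constructor
        · simp [Fin.ext_iff]; omega
        · simp; omega
      · refine ⟨Sum.inl ⟨0, hk0⟩, ?_⟩
        show (tQ k τ y d1 d2 ch).Adj (Sum.inl i) (Sum.inl ⟨0, hk0⟩)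
        simp only [tQ, qadj]
        exact ⟨by simpa [Fin.ext_iff] using h0, by simp; omega⟩
    · fin_cases j
      · exact ⟨Sum.inl ⟨0, hk0⟩, by simp [tQ, qadj, Fin.ext_iff]; omega⟩
      · exact ⟨Sum.inl ⟨0, hk0⟩, by simp [tQ, qadj, Fin.ext_iff]; omega⟩
      · cases hch : ch
        · exact ⟨Sum.inl ⟨0, hk0⟩, by simp [tQ, qadj, Fin.ext_iff, hch]⟩
        · exact ⟨Sum.inr 0, by simp [tQ, qadj, Fin.ext_iff, hch]⟩

end Template2

section Template3

variable (k τ y d1 d2 s2 : ℕ) (κ1 ch : Bool)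

lemma sum_fin_lt (c d : ℕ) (hd : d ≤ k) :
    ∑ a : Fin k, (if a.val < d then c else 0) = c * d := by
  rw [Fin.sum_univ_eq_sum_range (fun j => if j < d then c else 0) k]
  have h1 : ∀ j, (if j < d then c else 0) = c * (if j < d then 1 else 0) := by
    intro j; split <;> simp
  rw [Finset.sum_congr rfl (fun j _ => h1 j), ← Finset.mul_sum, ← Finset.card_filter]
  have h2 : (Finset.range k).filter (fun j => j < d) = Finset.range d := by
    ext j
    simp only [Finset.mem_filter, Finset.mem_range]
    omega
  rw [h2, Finset.card_range]

set_option maxHeartbeats 1000000 in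
lemma TG_ncard (hτ1 : 1 ≤ τ) (hτk : τ ≤ k) (hy : τ + 1 + y ≤ k ∨ y = 0)
    (hd1 : d1 ≤ k) (hd2 : d2 ≤ k) :
    2 * (TG k τ y d1 d2 s2 κ1 ch).edgeSet.ncard + 4*(τ*τ) + 4*τ
      = 8*(τ*k) + 8*y + 12*d1 + 4*(s2*d2)
        + (if ch then 12 else 8) + (if κ1 then 6 else 0) := by
  have hk1 : 1 ≤ k := le_trans hτ1 hτk
  rw [TG, blow_edge_ncard]
  rw [Fintype.sum_sum_type]
  simp only [Fintype.sum_sum_type, Fin.sum_univ_three]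
  simp only [tsize, tK, tQ, qadj, Sum.elim_inl, Sum.elim_inr]
  simp
  have hP : (∑ x : Fin k, ∑ b : Fin k, if padj τ y x.val b.val then (2:ℕ) else 0)
      = 2 * ∑ i ∈ Finset.range k, ((Finset.range k).filter (fun j => padj τ y i j)).card := by
    rw [Fin.sum_univ_eq_sum_range
      (fun i => ∑ b : Fin k, if padj τ y i b.val then (2:ℕ) else 0) k]
    rw [Finset.mul_sum]
    refine Finset.sum_congr rfl fun i _ => ?_
    rw [Fin.sum_univ_eq_sum_range (fun j => if padj τ y i j then (2:ℕ) else 0) k]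
    rw [Finset.card_filter, Finset.mul_sum]
    refine Finset.sum_congr rfl fun j _ => ?_
    split <;> simp
  have hT := padj_total (k := k) (τ := τ) (y := y) hτ1 hτk hy
  have hzero : (∑ x : Fin k, if ch = false ∧ x.val = 0 then (2:ℕ) else 0)
      = if ch then 0 else 2 := by
    cases ch
    · simp only [Bool.false_eq_true, if_false, true_and]
      rw [Fin.sum_univ_eq_sum_range (fun j => if j = 0 then (2:ℕ) else 0) k]
      have h2 : (Finset.range k) = {0} ∪ Finset.Ico 1 k := by
        ext j
        simp only [Finset.mem_range, Finset.mem_union, Finset.mem_singleton, Finset.mem_Ico]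
        omega
      rw [h2, Finset.sum_union (by
        rw [Finset.disjoint_left]
        intro a ha hb
        simp only [Finset.mem_singleton] at ha
        simp only [Finset.mem_Ico] at hb
        omega)]
      rw [Finset.sum_singleton, if_pos rfl]
      rw [Finset.sum_congr rfl (fun j hj => by
        have := Finset.mem_Ico.mp hj
        rw [if_neg (by omega)])]
      simp
    · simp
  have hsum1 : (∑ a : Fin k, (if a.val < d1 then (3:ℕ) else 0)) = 3 * d1 := sum_fin_lt k 3 d1 hd1
  have hsum2 : (∑ a : Fin k, (if a.val < d2 then (s2:ℕ) else 0)) = s2 * d2 := sum_fin_lt k s2 d2 hd2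
  have hsum3 : (∑ a : Fin k, (if a.val < d1 then (2:ℕ) else 0)) = 2 * d1 := sum_fin_lt k 2 d1 hd1
  have hsum4 : (∑ a : Fin k, (if a.val < d2 then (2:ℕ) else 0)) = 2 * d2 := sum_fin_lt k 2 d2 hd2
  have hmain : (∑ x : Fin k, 2 *
      ((∑ b : Fin k, if padj τ y x.val b.val then (2:ℕ) else 0) +
        (((if x.val < d1 then (3:ℕ) else 0) + if x.val < d2 then s2 else 0)
          + if ch = false ∧ x.val = 0 then 2 else 0)))
      = 2 * (∑ x : Fin k, ∑ b : Fin k, if padj τ y x.val b.val then (2:ℕ) else 0)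
        + 2 * (∑ a : Fin k, (if a.val < d1 then (3:ℕ) else 0))
        + 2 * (∑ a : Fin k, (if a.val < d2 then (s2:ℕ) else 0))
        + 2 * (∑ x : Fin k, if ch = false ∧ x.val = 0 then (2:ℕ) else 0) := by
    have hpt : ∀ x : Fin k, 2 *
        ((∑ b : Fin k, if padj τ y x.val b.val then (2:ℕ) else 0) +
          (((if x.val < d1 then (3:ℕ) else 0) + if x.val < d2 then s2 else 0)
            + if ch = false ∧ x.val = 0 then 2 else 0))
        = 2 * (∑ b : Fin k, if padj τ y x.val b.val then (2:ℕ) else 0)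
          + 2 * (if x.val < d1 then (3:ℕ) else 0)
          + 2 * (if x.val < d2 then (s2:ℕ) else 0)
          + 2 * (if ch = false ∧ x.val = 0 then (2:ℕ) else 0) := fun x => by ring
    rw [Finset.sum_congr rfl (fun x _ => hpt x), Finset.sum_add_distrib,
      Finset.sum_add_distrib, Finset.sum_add_distrib,
      ← Finset.mul_sum, ← Finset.mul_sum, ← Finset.mul_sum, ← Finset.mul_sum]
  rw [hmain, hP, hzero, hsum1, hsum2, hsum3, hsum4]
  rw [mul_assoc] at hT
  cases ch <;> cases κ1 <;>
    simp only [Bool.true_eq_false, Bool.false_eq_true, if_true, if_false] <;>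
    linarith [hT]

end Template3

section Build

lemma rep4 : ∀ (J : ℕ), ∀ (D Rm : ℕ), D % 4 = 0 → 2 ≤ Rm → D ≤ 12*J + 4*Rm →
    ∃ j R, j ≤ J ∧ R ≤ Rm ∧ D = 12*j + 4*R := by
  intro J
  induction J with
  | zero =>
    intro D Rm h4 h2 hle
    exact ⟨0, D/4, le_refl 0, by omega, by omega⟩
  | succ n ih =>
    intro D Rm h4 h2 hle
    by_cases hD : D ≤ 4*Rm
    · exact ⟨0, D/4, by omega, by omega, by omega⟩
    · obtain ⟨j, R, hj, hR, hEq⟩ := ih (D - 12) Rm (by omega) h2 (by omega)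
      exact ⟨j+1, R, by omega, hR, by omega⟩

lemma consec_even (a : ℕ) : ∃ m, a*(a+1) = 2*m := (Nat.even_mul_succ_self a).exists_two_nsmul _

lemma expand_km (k : ℕ) (hk : 1 ≤ k) : (k-1)*(k-2) + 3*k = k*k + 2 := by
  rcases k with _ | k
  · omega
  · rcases k with _ | k
    · norm_num
    · have : (k+2) - 1 = k+1 := by omega
      rw [this]
      have h2 : (k+2) - 2 = k := by omega
      rw [h2]
      ring

lemma tau_inversion (k R : ℕ) (hk : 1 ≤ k) (hR : 2*R ≤ (k-1)*(k-2)) :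
    ∃ τ y, 1 ≤ τ ∧ τ ≤ k ∧ (τ + 1 + y ≤ k ∨ y = 0) ∧
      2*(k - 1 + R) + τ*τ + τ = 2*(τ*k) + 2*y := by
  classical
  set P : ℕ → Prop := fun t => 2*(t*k) ≤ t*t + t + 2*(k - 1 + R) with hP
  have hP1 : P 1 := by simp only [hP]; omega
  set τ := Nat.findGreatest P k with hτ
  have hτ1 : 1 ≤ τ := Nat.le_findGreatest hk hP1
  have hτk : τ ≤ k := Nat.findGreatest_le k
  have hPτ : P τ := Nat.findGreatest_spec hk hP1
  obtain ⟨m, hm⟩ := consec_even τ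
  have hmm : τ*τ + τ = 2*m := by rw [← hm]; ring
  have hy : ∃ y, 2*(k - 1 + R) + τ*τ + τ = 2*(τ*k) + 2*y := by
    refine ⟨(k - 1 + R) + m - τ*k, ?_⟩
    simp only [hP] at hPτ
    omega
  obtain ⟨y, hyeq⟩ := hy
  refine ⟨τ, y, hτ1, hτk, ?_, hyeq⟩
  rcases Nat.lt_or_ge τ k with hlt | hge
  · left
    have hnP : ¬ P (τ+1) := Nat.findGreatest_is_greatest (by omega) hlt
    simp only [hP] at hnP
    push_neg at hnP
    have hexp1 : (τ+1)*k = τ*k + k := by ring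
    have hexp2 : (τ+1)*(τ+1) + (τ+1) = τ*τ + 3*τ + 2 := by ring
    omega
  · right
    have hτek : τ = k := le_antisymm hτk hge
    have hkk := expand_km k hk
    rw [hτek] at hyeq
    omega

lemma build (n k τ y d1 d2 s2 : ℕ) (κ1 ch : Bool)
    (hn : n = 2*k + 5 + s2)
    (h2k : 2 ≤ k) (hτ1 : 1 ≤ τ) (hτk : τ ≤ k) (hy : τ + 1 + y ≤ k ∨ y = 0)
    (hd1l : 1 ≤ d1) (hd1 : d1 ≤ k) (hd2l : 1 ≤ d2) (hd2 : d2 ≤ k) (hs2 : 2 ≤ s2)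
    (m : ℕ)
    (hm : 2*m + 4*(τ*τ) + 4*τ = 8*(τ*k) + 8*y + 12*d1 + 4*(s2*d2)
        + (if ch then 12 else 8) + (if κ1 then 6 else 0)) :
    ∃ G : SimpleGraph (Fin n), IsAnosov G ∧ G.edgeSet.ncard = m := by
  have hcard : Fintype.card ((i : Fin k ⊕ Fin 3) × Fin (tsize k s2 i)) = n := by
    rw [TG_card]; omega
  set e := Fintype.equivFinOfCardEq hcard with he
  refine ⟨(TG k τ y d1 d2 s2 κ1 ch).comap e.symm, ?_, ?_⟩
  · exact isAnosov_iso (G := TG k τ y d1 d2 s2 κ1 ch)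
      (⟨e.symm, Iff.rfl⟩ : (TG k τ y d1 d2 s2 κ1 ch).comap ⇑e.symm ≃g TG k τ y d1 d2 s2 κ1 ch).symm
      (TG_anosov k τ y d1 d2 s2 κ1 ch h2k hτ1 hd1l hd2l hs2)
  · rw [edge_ncard_iso
      (⟨e.symm, Iff.rfl⟩ : (TG k τ y d1 d2 s2 κ1 ch).comap ⇑e.symm ≃g TG k τ y d1 d2 s2 κ1 ch)]
    have h := TG_ncard k τ y d1 d2 s2 κ1 ch hτ1 hτk hy hd1 hd2
    omega

lemma build2 (n δ k s2 d1 d2 R : ℕ) (κ1 ch : Bool)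
    (hn : n = 2*k + 5 + s2) (h2k : 2 ≤ k) (hs2 : 2 ≤ s2)
    (hd1l : 1 ≤ d1) (hd1 : d1 ≤ k) (hd2l : 1 ≤ d2) (hd2 : d2 ≤ k)
    (hR : 2*R ≤ (k-1)*(k-2))
    (hδeq : 2*(2*n - 4 + δ) = 8*(k - 1 + R) + 12*d1 + 4*(s2*d2)
        + (if ch then 12 else 8) + (if κ1 then 6 else 0)) :
    ∃ G : SimpleGraph (Fin n), IsAnosov G ∧ G.edgeSet.ncard = 2*n - 4 + δ := by
  obtain ⟨τ, yy, hτ1, hτk, hy, hE⟩ := tau_inversion k R (by omega) hR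
  refine build n k τ yy d1 d2 s2 κ1 ch hn h2k hτ1 hτk hy hd1l hd1 hd2l hd2 hs2 _ ?_
  have hE4 : 8*(k - 1 + R) + 4*(τ*τ) + 4*τ = 8*(τ*k) + 8*yy := by omega
  omega

end Build

section Coverage

lemma coverage_even (k δ : ℕ) (hk : 4 ≤ k) (hδ2 : 2 ≤ δ)
    (hcap : 2*δ + 14*(2*k+8) ≤ (2*k+8)*(2*k+8) + 23) :
    ∃ G : SimpleGraph (Fin (2*k+8)), IsAnosov G ∧
      G.edgeSet.ncard = 2*(2*k+8) - 4 + δ := by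
  have h1 : k - 2 + 1 = k - 1 := by omega
  obtain ⟨Rm, hm⟩ := consec_even (k-2)
  rw [h1] at hm
  have hm' : (k-1)*(k-2) = 2*Rm := by rw [mul_comm]; exact hm
  have hkk : (2*k+8)*(2*k+8) = 4*(k*k) + 32*k + 64 := by ring
  have hexp := expand_km k (by omega)
  have hk4 : 4*k ≤ k*k := Nat.mul_le_mul_right k hk
  have hRm2 : 2 ≤ Rm := by omega
  have hbuild : ∀ (b : ℕ) (κ1 ch : Bool), b ≤ δ →
      ((if ch then (12:ℕ) else 8) + (if κ1 then (6:ℕ) else 0) = 8 + 2*b) →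
      (δ - b) % 4 = 0 →
      ∃ G : SimpleGraph (Fin (2*k+8)), IsAnosov G ∧
        G.edgeSet.ncard = 2*(2*k+8) - 4 + δ := by
    intro b κ1 ch hbδ hbases hD4
    obtain ⟨j, R, hj, hR, hD⟩ := rep4 (k-1) (δ - b) Rm hD4 hRm2 (by omega)
    refine build2 (2*k+8) δ k 3 (1 + min (2*j) (k-1)) (1 + (2*j - min (2*j) (k-1)))
      R κ1 ch (by omega) (by omega) (by norm_num) (by omega) (by omega) (by omega)
      (by omega) (by omega) ?_
    cases ch <;> cases κ1 <;>
      simp only [Bool.true_eq_false, Bool.false_eq_true, if_true, if_false] at hbases ⊢ <;>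
      omega
  rcases (by omega : δ % 4 = 0 ∨ δ % 4 = 1 ∨ δ % 4 = 2 ∨ δ % 4 = 3) with h|h|h|h
  · exact hbuild 0 false false (by omega) (by norm_num) (by omega)
  · exact hbuild 5 true true (by omega) (by norm_num) (by omega)
  · exact hbuild 2 false true (by omega) (by norm_num) (by omega)
  · exact hbuild 3 true false (by omega) (by norm_num) (by omega)

lemma coverage_odd (k δ : ℕ) (hk : 3 ≤ k) (hδ2 : 2 ≤ δ)
    (hcap : 2*δ + 14*(2*k+7) ≤ (2*k+7)*(2*k+7) + 23) :
    ∃ G : SimpleGraph (Fin (2*k+7)), IsAnosov G ∧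
      G.edgeSet.ncard = 2*(2*k+7) - 4 + δ := by
  have h1 : k - 2 + 1 = k - 1 := by omega
  obtain ⟨Rm, hm⟩ := consec_even (k-2)
  rw [h1] at hm
  have hm' : (k-1)*(k-2) = 2*Rm := by rw [mul_comm]; exact hm
  have hkk : (2*k+7)*(2*k+7) = 4*(k*k) + 28*k + 49 := by ring
  have hexp := expand_km k (by omega)
  have hk4 : 3*k ≤ k*k := Nat.mul_le_mul_right k hk
  have hRm1 : 1 ≤ Rm := by omega
  have hbuild : ∀ (b : ℕ) (κ1 ch : Bool), b ≤ δ →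
      ((if ch then (12:ℕ) else 8) + (if κ1 then (6:ℕ) else 0) = 8 + 2*b) →
      (δ - b) % 4 = 0 →
      ∃ G : SimpleGraph (Fin (2*k+7)), IsAnosov G ∧
        G.edgeSet.ncard = 2*(2*k+7) - 4 + δ := by
    intro b κ1 ch hbδ hbases hD4
    obtain ⟨j, R', hj, hR', hD⟩ := rep4 ((k-1)/2) (δ - b) (Rm + (k-1)) hD4 (by omega) (by omega)
    refine build2 (2*k+7) δ k 2 (1 + 2*j) (1 + (R' - min R' Rm)) (min R' Rm) κ1 ch
      (by omega) (by omega) (by norm_num) (by omega) (by omega) (by omega)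
      (by omega) (by omega) ?_
    cases ch <;> cases κ1 <;>
      simp only [Bool.true_eq_false, Bool.false_eq_true, if_true, if_false] at hbases ⊢ <;>
      omega
  rcases (by omega : δ % 4 = 0 ∨ δ % 4 = 1 ∨ δ % 4 = 2 ∨ δ % 4 = 3) with h|h|h|h
  · exact hbuild 0 false false (by omega) (by norm_num) (by omega)
  · exact hbuild 5 true true (by omega) (by norm_num) (by omega)
  · exact hbuild 2 false true (by omega) (by norm_num) (by omega)
  · exact hbuild 3 true false (by omega) (by norm_num) (by omega)

end Coverage

theorem coverage (n δ : ℕ) (hn13 : 13 ≤ n) (hδ2 : 2 ≤ δ)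
    (hcap : 2*δ + 14*n ≤ n*n + 23) :
    ∃ G : SimpleGraph (Fin n), IsAnosov G ∧ G.edgeSet.ncard = 2*n - 4 + δ := by
  rcases Nat.even_or_odd n with he | ho
  · obtain ⟨k, hkn⟩ : ∃ k, n = 2*k + 8 := by
      obtain ⟨m, hm⟩ := he
      exact ⟨m - 4, by omega⟩
    subst hkn
    rcases Nat.lt_or_ge k 4 with hk3 | hk4
    · have hk3' : k = 3 := by omega
      subst hk3'
      have hδ11 : δ ≤ 11 := by omega
      interval_cases δ
      · exact build2 (2*3+8) 2 3 3 1 1 0 false true (by norm_num) (by norm_num) (by norm_num)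
          (by norm_num) (by norm_num) (by norm_num) (by norm_num) (by norm_num) (by decide)
      · exact build2 (2*3+8) 3 3 3 1 1 0 true false (by norm_num) (by norm_num) (by norm_num)
          (by norm_num) (by norm_num) (by norm_num) (by norm_num) (by norm_num) (by decide)
      · exact build2 (2*3+8) 4 3 3 1 1 1 false false (by norm_num) (by norm_num) (by norm_num)
          (by norm_num) (by norm_num) (by norm_num) (by norm_num) (by norm_num) (by decide)
      · exact build2 (2*3+8) 5 3 3 1 1 0 true true (by norm_num) (by norm_num) (by norm_num)
          (by norm_num) (by norm_num) (by norm_num) (by norm_num) (by norm_num) (by decide)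
      · exact build2 (2*3+8) 6 3 3 1 1 1 false true (by norm_num) (by norm_num) (by norm_num)
          (by norm_num) (by norm_num) (by norm_num) (by norm_num) (by norm_num) (by decide)
      · exact build2 (2*3+8) 7 3 3 1 1 1 true false (by norm_num) (by norm_num) (by norm_num)
          (by norm_num) (by norm_num) (by norm_num) (by norm_num) (by norm_num) (by decide)
      · exact build2 (2*3+8) 8 3 3 2 1 0 false true (by norm_num) (by norm_num) (by norm_num)
          (by norm_num) (by norm_num) (by norm_num) (by norm_num) (by norm_num) (by decide)
      · exact build2 (2*3+8) 9 3 3 1 1 1 true true (by norm_num) (by norm_num) (by norm_num)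
          (by norm_num) (by norm_num) (by norm_num) (by norm_num) (by norm_num) (by decide)
      · exact build2 (2*3+8) 10 3 3 2 1 1 false false (by norm_num) (by norm_num) (by norm_num)
          (by norm_num) (by norm_num) (by norm_num) (by norm_num) (by norm_num) (by decide)
      · exact build2 (2*3+8) 11 3 3 2 1 0 true true (by norm_num) (by norm_num) (by norm_num)
          (by norm_num) (by norm_num) (by norm_num) (by norm_num) (by norm_num) (by decide)
    · exact coverage_even k δ hk4 hδ2 hcap
  · obtain ⟨k, hkn⟩ : ∃ k, n = 2*k + 7 := by
      obtain ⟨m, hm⟩ := ho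
      exact ⟨m - 3, by omega⟩
    subst hkn
    exact coverage_odd k δ (by omega) hδ2 hcap

instance anosovFinite (w : ℕ) :
    Finite {p : Σ n : ℕ, SimpleGraph (Fin n) // IsAnosov p.2 ∧ p.1 + p.2.edgeSet.ncard = w} := by
  have hlt : ∀ p : {p : Σ n : ℕ, SimpleGraph (Fin n) //
      IsAnosov p.2 ∧ p.1 + p.2.edgeSet.ncard = w}, p.1.1 < w + 1 := fun p => by
    have := p.2.2
    omega
  apply Finite.of_injective
    (fun p : {p : Σ n : ℕ, SimpleGraph (Fin n) // IsAnosov p.2 ∧ p.1 + p.2.edgeSet.ncard = w} =>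
      (⟨⟨p.1.1, hlt p⟩, p.1.2⟩ : Σ n : Fin (w+1), SimpleGraph (Fin n.1)))
  rintro ⟨⟨a, G⟩, hG⟩ ⟨⟨b, H⟩, hH⟩ h
  simp only at h
  obtain ⟨h1, h2⟩ := Sigma.mk.inj_iff.mp h
  have hab : a = b := by simpa [Fin.ext_iff] using h1
  subst hab
  have hGH : G = H := eq_of_heq h2
  subst hGH
  rfl

theorem nu_ge (w : ℕ) : ((w+2)/3 + 1) - (Nat.sqrt (2*w) + 5) ≤ nuCount w := by
  classical
  rw [← Nat.card_Icc]
  have key : ∀ n ∈ Finset.Icc (Nat.sqrt (2*w) + 5) ((w+2)/3), ∃ G : SimpleGraph (Fin n),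
      IsAnosov G ∧ n + G.edgeSet.ncard = w := by
    intro n hn
    rw [Finset.mem_Icc] at hn
    obtain ⟨hn1, hnq⟩ := hn
    have h3n : 3*n ≤ w + 2 := by omega
    have hsq : 2*w < (n-4)*(n-4) := by
      have h5 : Nat.sqrt (2*w) < n - 4 := by omega
      have h6 := Nat.sqrt_lt'.mp h5
      rwa [pow_two] at h6
    have h5n : 5 ≤ n := by omega
    have h13 : 13 ≤ n := by
      by_contra hlt
      push_neg at hlt
      interval_cases n <;> omega
    have hδ2 : 2 ≤ w + 4 - 3*n := by omega
    have hsqexp : (n-4)*(n-4) + 8*n = n*n + 16 := by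
      obtain ⟨m, rfl⟩ : ∃ m, n = m + 13 := ⟨n - 13, by omega⟩
      have h1 : m + 13 - 4 = m + 9 := by omega
      rw [h1]
      ring
    have hcap : 2*(w + 4 - 3*n) + 14*n ≤ n*n + 23 := by omega
    obtain ⟨G, hG, hGcard⟩ := coverage n (w + 4 - 3*n) h13 hδ2 hcap
    refine ⟨G, hG, ?_⟩
    rw [hGcard]
    omega
  choose Gf hG1 hG2 using key
  have hinj : Function.Injective
      (fun x : {x // x ∈ Finset.Icc (Nat.sqrt (2*w) + 5) ((w+2)/3)} =>
        (Quotient.mk (nuSetoid w) ⟨⟨x.1, Gf x.1 x.2⟩, hG1 x.1 x.2, hG2 x.1 x.2⟩ :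
          Quotient (nuSetoid w))) := by
    intro x y hxy
    obtain ⟨iso⟩ := Quotient.exact hxy
    have hcards : x.1 = y.1 := by
      have := Fintype.card_congr iso.toEquiv
      simpa using this
    exact Subtype.ext hcards
  have hle := Nat.card_le_card_of_injective _ hinj
  rwa [Nat.card_eq_fintype_card, Fintype.card_coe] at hle


/-- `ν(n+m) > (n+m)/3 − √(2(n+m)) − 9/2`. -/
theorem nuCount_lower_bound (w : ℕ) :
    (w : ℝ) / 3 - Real.sqrt (2 * w) - 9 / 2 < (nuCount w : ℝ) := by
  have hν0 : (0:ℝ) ≤ (nuCount w : ℝ) := Nat.cast_nonneg _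
  have hsq0 : (0:ℝ) ≤ Real.sqrt (2 * w) := Real.sqrt_nonneg _
  rcases le_or_gt w 40 with hw | hw
  · rcases le_or_gt w 13 with h13 | h13
    · have hle : (w:ℝ) ≤ 13 := by exact_mod_cast h13
      linarith
    · have hw14 : (14:ℝ) ≤ w := by exact_mod_cast h13
      have hw40 : (w:ℝ) ≤ 40 := by exact_mod_cast hw
      have hss := Real.sq_sqrt (by positivity : (0:ℝ) ≤ 2 * (w:ℝ))
      by_contra hcon
      push_neg at hcon
      have hS : Real.sqrt (2 * (w:ℝ)) ≤ (w:ℝ)/3 - 9/2 := by linarith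
      have h2 : 2*(w:ℝ) ≤ ((w:ℝ)/3 - 9/2)^2 := by
        calc 2*(w:ℝ) = (Real.sqrt (2 * (w:ℝ)))^2 := hss.symm
        _ ≤ ((w:ℝ)/3 - 9/2)^2 := by
            apply pow_le_pow_left₀ hsq0 hS
      nlinarith [h2, mul_nonneg (sub_nonneg.mpr hw14) (sub_nonneg.mpr hw40)]
  · set s := Nat.sqrt (2*w) with hs
    set q := (w+2)/3 with hq
    have hcount := nu_ge w
    have h3q : w ≤ 3 * q := by omega
    have hsk : s * s ≤ 2*w := Nat.sqrt_le (2*w)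
    have hn1q : s + 5 ≤ q := by
      rcases Nat.lt_or_ge s 10 with h10 | h10
      · omega
      · have h2 : 10 * s ≤ s * s := Nat.mul_le_mul_right s h10
        omega
    have hν : ((q + 1 - (s+5) : ℕ) : ℝ) ≤ (nuCount w : ℝ) := by exact_mod_cast hcount
    have hcast : ((q + 1 - (s+5) : ℕ) : ℝ) = (q:ℝ) - (s:ℝ) - 4 := by
      rw [Nat.cast_sub (by omega : s+5 ≤ q+1)]
      push_cast
      ring
    have hq3 : (w:ℝ) ≤ 3*(q:ℝ) := by exact_mod_cast h3q
    have hsR : (s:ℝ) ≤ Real.sqrt (2 * w) := by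
      rw [Real.le_sqrt (by positivity) (by positivity)]
      have : ((s*s : ℕ) : ℝ) ≤ ((2*w : ℕ) : ℝ) := by exact_mod_cast hsk
      push_cast at this
      nlinarith [this]
    rw [hcast] at hν
    linarith
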